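/- For real numbers λ₁, λ₂, λ₃, λ₄ with |λᵢ| < 1, pairwise distinct, and a nonnegative integer S, the triple infinite sum ∑_{j₁,j₂,j₃ ∈ ℤ} λ₁^{|j₁|} λ₂^{|j₂|} λ₃^{|j₃|} λ₄^{|S-j₁-j₂-j₃|} equals ∑_{i=1}^{4} λᵢ^{S+3} ∏_{j≠i} (1-λⱼ²)/((λᵢ-λⱼ)(1-λᵢλⱼ)). -/

import Mathlib

open Finset

noncomputable def Acoef (x y : ℝ) : ℝ := x * (1 - y ^ 2) / ((x - y) * (1 - x * y))

lemma sumZpow {r : ℝ} (hr : |r| < 1) : Summable fun j : ℤ => r ^ j.natAbs := by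
  apply Summable.of_nat_of_neg
  · simpa using summable_geometric_of_abs_lt_one hr
  · simpa using summable_geometric_of_abs_lt_one hr

lemma convNat {a b : ℝ} (ha : |a| < 1) (hb : |b| < 1) (hab : a ≠ b) (m : ℕ) :
    HasSum (fun j : ℤ => a ^ j.natAbs * b ^ ((m : ℤ) - j).natAbs)
      (Acoef a b * a ^ m + Acoef b a * b ^ m) := by
  have h0 : 0 ≤ |a| * |b| := by positivity
  have habl : |a * b| < 1 := by
    rw [abs_mul]
    nlinarith [abs_nonneg a, abs_nonneg b]
  have hab1 : (1 : ℝ) - a * b ≠ 0 := by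
    have : a * b < 1 := lt_of_le_of_lt (le_abs_self _) habl
    linarith
  have hgeo : HasSum (fun n : ℕ => (a * b) ^ n) (1 - a * b)⁻¹ :=
    hasSum_geometric_of_abs_lt_one habl
  have hneg : HasSum (fun n : ℕ => a ^ (n + 1) * b ^ (m + n + 1))
      (a * b ^ (m + 1) * (1 - a * b)⁻¹) := by
    have hfun : (fun n : ℕ => a ^ (n + 1) * b ^ (m + n + 1))
        = fun n : ℕ => a * b ^ (m + 1) * (a * b) ^ n := by
      funext n; ring
    rw [hfun]; exact hgeo.mul_left _
  set g : ℕ → ℝ := fun n => a ^ n * b ^ ((m : ℤ) - n).natAbs with hg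
  have hshift : (fun n : ℕ => g (n + (m + 1)))
      = fun n : ℕ => a ^ (m + 1) * b * (a * b) ^ n := by
    funext n
    have h1 : ((m : ℤ) - ((n + (m + 1) : ℕ) : ℤ)).natAbs = n + 1 := by omega
    simp only [hg, h1]
    ring
  have hpos : HasSum g
      (a ^ (m + 1) * b * (1 - a * b)⁻¹ + ∑ i ∈ range (m + 1), g i) := by
    refine (hasSum_nat_add_iff (m + 1)).1 ?_
    rw [hshift]; exact hgeo.mul_left _
  have htot : HasSum (fun j : ℤ => a ^ j.natAbs * b ^ ((m : ℤ) - j).natAbs)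
      ((a ^ (m + 1) * b * (1 - a * b)⁻¹ + ∑ i ∈ range (m + 1), g i)
        + a * b ^ (m + 1) * (1 - a * b)⁻¹) := by
    refine HasSum.of_nat_of_neg_add_one ?_ ?_
    · have e1 : (fun n : ℕ => a ^ ((n : ℤ)).natAbs * b ^ ((m : ℤ) - (n : ℤ)).natAbs) = g := by
        funext n; simp [hg]
      rw [e1]; exact hpos
    · have e2 : (fun n : ℕ => a ^ (-((n : ℤ) + 1)).natAbs * b ^ ((m : ℤ) - (-((n : ℤ) + 1))).natAbs)
          = fun n : ℕ => a ^ (n + 1) * b ^ (m + n + 1) := by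
        funext n
        have h1 : (-((n : ℤ) + 1)).natAbs = n + 1 := by omega
        have h2 : ((m : ℤ) - (-((n : ℤ) + 1))).natAbs = m + n + 1 := by omega
        rw [h1, h2]
      rw [e2]; exact hneg
  have hsum : ∑ i ∈ range (m + 1), g i = (a ^ (m + 1) - b ^ (m + 1)) / (a - b) := by
    have e : ∑ i ∈ range (m + 1), g i = ∑ i ∈ range (m + 1), a ^ i * b ^ (m - i) := by
      refine Finset.sum_congr rfl fun i hi => ?_
      have hi' : i ≤ m := by simpa [Nat.lt_succ_iff] using hi
      have : ((m : ℤ) - i).natAbs = m - i := by omega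
      simp [hg, this]
    rw [e, eq_div_iff (sub_ne_zero.2 hab)]
    have := geom_sum₂_mul a b (m + 1)
    simpa using this
  have hval : (a ^ (m + 1) * b * (1 - a * b)⁻¹ + ∑ i ∈ range (m + 1), g i)
        + a * b ^ (m + 1) * (1 - a * b)⁻¹
      = Acoef a b * a ^ m + Acoef b a * b ^ m := by
    rw [hsum, Acoef, Acoef]
    have h1 : a - b ≠ 0 := sub_ne_zero.2 hab
    have h2 : b - a ≠ 0 := sub_ne_zero.2 (Ne.symm hab)
    have h3 : (1 : ℝ) - b * a ≠ 0 := by rw [mul_comm]; exact hab1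
    field_simp
    ring
  rwa [hval] at htot

lemma convInt {a b : ℝ} (ha : |a| < 1) (hb : |b| < 1) (hab : a ≠ b) (n : ℤ) :
    HasSum (fun j : ℤ => a ^ j.natAbs * b ^ (n - j).natAbs)
      (Acoef a b * a ^ n.natAbs + Acoef b a * b ^ n.natAbs) := by
  rcases Int.natAbs_eq n with h | h
  · have hh : ((n.natAbs : ℤ)).natAbs = n.natAbs := Int.natAbs_natCast _
    rw [h]
    rw [hh]
    exact convNat ha hb hab n.natAbs
  · refine ((Equiv.neg ℤ).hasSum_iff).mp ?_
    have e : ((fun j : ℤ => a ^ j.natAbs * b ^ (n - j).natAbs) ∘ (Equiv.neg ℤ))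
        = fun j : ℤ => a ^ j.natAbs * b ^ (((n.natAbs : ℤ)) - j).natAbs := by
      funext j
      simp only [Function.comp, Equiv.neg_apply]
      have h1 : (-j).natAbs = j.natAbs := by omega
      have h2 : (n - (-j)).natAbs = ((n.natAbs : ℤ) - j).natAbs := by omega
      rw [h1, h2]
    rw [e]
    exact convNat ha hb hab n.natAbs

set_option maxHeartbeats 1000000 in
lemma key1 (b c d : ℝ)
    (hbc : b - c ≠ 0) (hbd : b - d ≠ 0) (hcd : c - d ≠ 0)
    (obc : 1 - b * c ≠ 0) (obd : 1 - b * d ≠ 0) (ocd : 1 - c * d ≠ 0) :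
    Acoef c d * Acoef b c + Acoef d c * Acoef b d = Acoef b c * Acoef b d := by
  have hdc : d - c ≠ 0 := by intro h; apply hcd; linarith [sub_eq_zero.1 h]
  have odc : 1 - d * c ≠ 0 := by rwa [mul_comm] at ocd
  simp only [Acoef]
  rw [div_mul_div_comm, div_mul_div_comm, div_mul_div_comm,
    div_add_div _ _ (mul_ne_zero (mul_ne_zero hcd ocd) (mul_ne_zero hbc obc))
      (mul_ne_zero (mul_ne_zero hdc odc) (mul_ne_zero hbd obd)),
    div_eq_div_iff (mul_ne_zero (mul_ne_zero (mul_ne_zero hcd ocd) (mul_ne_zero hbc obc))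
      (mul_ne_zero (mul_ne_zero hdc odc) (mul_ne_zero hbd obd)))
      (mul_ne_zero (mul_ne_zero hbc obc) (mul_ne_zero hbd obd))]
  ring

lemma key2 (a b c d : ℝ)
    (hab : a - b ≠ 0) (hac : a - c ≠ 0) (had : a - d ≠ 0)
    (hbc : b - c ≠ 0) (hbd : b - d ≠ 0) (hcd : c - d ≠ 0)
    (oab : 1 - a * b ≠ 0) (oac : 1 - a * c ≠ 0) (oad : 1 - a * d ≠ 0)
    (obc : 1 - b * c ≠ 0) (obd : 1 - b * d ≠ 0) (ocd : 1 - c * d ≠ 0) :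
    Acoef b c * Acoef b d * Acoef a b + Acoef c d * Acoef c b * Acoef a c
      + Acoef d c * Acoef d b * Acoef a d
    = Acoef a b * Acoef a c * Acoef a d := by
  have k1 := key1 b c d hbc hbd hcd obc obd ocd
  have k2 := key1 a c d hac had hcd oac oad ocd
  have k3 := key1 a b c hab hac hbc oab oac obc
  have k4 := key1 a b d hab had hbd oab oad obd
  linear_combination Acoef c d * k3 + Acoef d c * k4 - Acoef a b * k1 + Acoef a b * k2

lemma finalAlg (a b c d p q r s : ℝ)
    (hab : a - b ≠ 0) (hac : a - c ≠ 0) (had : a - d ≠ 0)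
    (hbc : b - c ≠ 0) (hbd : b - d ≠ 0) (hcd : c - d ≠ 0)
    (oab : 1 - a * b ≠ 0) (oac : 1 - a * c ≠ 0) (oad : 1 - a * d ≠ 0)
    (obc : 1 - b * c ≠ 0) (obd : 1 - b * d ≠ 0) (ocd : 1 - c * d ≠ 0) :
    (Acoef c d * Acoef b c + Acoef d c * Acoef b d) * (Acoef a b * p + Acoef b a * q)
      + Acoef c d * Acoef c b * (Acoef a c * p + Acoef c a * r)
      + Acoef d c * Acoef d b * (Acoef a d * p + Acoef d a * s)
    = p * a ^ 3 * ((1 - b ^ 2) / ((a - b) * (1 - a * b)) * ((1 - c ^ 2) / ((a - c) * (1 - a * c)) * ((1 - d ^ 2) / ((a - d) * (1 - a * d)))))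
      + q * b ^ 3 * ((1 - a ^ 2) / ((b - a) * (1 - b * a)) * ((1 - c ^ 2) / ((b - c) * (1 - b * c)) * ((1 - d ^ 2) / ((b - d) * (1 - b * d)))))
      + r * c ^ 3 * ((1 - a ^ 2) / ((c - a) * (1 - c * a)) * ((1 - b ^ 2) / ((c - b) * (1 - c * b)) * ((1 - d ^ 2) / ((c - d) * (1 - c * d)))))
      + s * d ^ 3 * ((1 - a ^ 2) / ((d - a) * (1 - d * a)) * ((1 - b ^ 2) / ((d - b) * (1 - d * b)) * ((1 - c ^ 2) / ((d - c) * (1 - d * c))))) := by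
  have hP : a ^ 3 * ((1 - b ^ 2) / ((a - b) * (1 - a * b)) * ((1 - c ^ 2) / ((a - c) * (1 - a * c)) * ((1 - d ^ 2) / ((a - d) * (1 - a * d)))))
      = Acoef a b * Acoef a c * Acoef a d := by simp only [Acoef]; ring
  have hQ : b ^ 3 * ((1 - a ^ 2) / ((b - a) * (1 - b * a)) * ((1 - c ^ 2) / ((b - c) * (1 - b * c)) * ((1 - d ^ 2) / ((b - d) * (1 - b * d)))))
      = Acoef b a * Acoef b c * Acoef b d := by simp only [Acoef]; ring
  have hR : c ^ 3 * ((1 - a ^ 2) / ((c - a) * (1 - c * a)) * ((1 - b ^ 2) / ((c - b) * (1 - c * b)) * ((1 - d ^ 2) / ((c - d) * (1 - c * d)))))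
      = Acoef c a * Acoef c b * Acoef c d := by simp only [Acoef]; ring
  have hS : d ^ 3 * ((1 - a ^ 2) / ((d - a) * (1 - d * a)) * ((1 - b ^ 2) / ((d - b) * (1 - d * b)) * ((1 - c ^ 2) / ((d - c) * (1 - d * c)))))
      = Acoef d a * Acoef d b * Acoef d c := by simp only [Acoef]; ring
  have k1 := key1 b c d hbc hbd hcd obc obd ocd
  have k2 := key2 a b c d hab hac had hbc hbd hcd oab oac oad obc obd ocd
  linear_combination (Acoef a b * p + Acoef b a * q) * k1 + p * k2
    - p * hP - q * hQ - r * hR - s * hS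

set_option maxHeartbeats 1000000 in
theorem stmt_11 (l : Fin 4 → ℝ) (hl : ∀ i, |l i| < 1)
    (hdist : Function.Injective l) (S : ℕ) :
    ∑' t : ℤ × ℤ × ℤ,
        l 0 ^ t.1.natAbs * l 1 ^ t.2.1.natAbs * l 2 ^ t.2.2.natAbs *
          l 3 ^ ((S : ℤ) - t.1 - t.2.1 - t.2.2).natAbs =
      ∑ i : Fin 4, l i ^ (S + 3) *
        ∏ j ∈ Finset.univ.erase i, (1 - l j ^ 2) / ((l i - l j) * (1 - l i * l j)) := by
  have hd : ∀ i j : Fin 4, i ≠ j → l i ≠ l j := fun i j hij h => hij (hdist h)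
  have hne : ∀ i j : Fin 4, i ≠ j → l i - l j ≠ 0 := fun i j hij =>
    sub_ne_zero.2 (hd i j hij)
  have hone : ∀ i j : Fin 4, 1 - l i * l j ≠ 0 := by
    intro i j
    have h1 := hl i; have h2 := hl j
    have hle : l i * l j ≤ |l i| * |l j| := by
      calc l i * l j ≤ |l i * l j| := le_abs_self _
        _ = |l i| * |l j| := abs_mul _ _
    have : (0 : ℝ) < 1 - l i * l j := by nlinarith [abs_nonneg (l i), abs_nonneg (l j)]
    exact this.ne'
  set F : ℤ × ℤ × ℤ → ℝ := fun t =>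
      l 0 ^ t.1.natAbs * l 1 ^ t.2.1.natAbs * l 2 ^ t.2.2.natAbs *
        l 3 ^ ((S : ℤ) - t.1 - t.2.1 - t.2.2).natAbs with hF
  -- summability
  have habs : ∀ i : Fin 4, |(|l i|)| < 1 := fun i => by rw [abs_abs]; exact hl i
  have s0 := sumZpow (habs 0)
  have s1 := sumZpow (habs 1)
  have s2 := sumZpow (habs 2)
  have hGsum : Summable (fun t : ℤ × ℤ × ℤ =>
      |l 0| ^ t.1.natAbs * (|l 1| ^ t.2.1.natAbs * |l 2| ^ t.2.2.natAbs)) := by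
    exact s0.mul_of_nonneg
      (s1.mul_of_nonneg s2 (fun n => by positivity) (fun n => by positivity))
      (fun n => by positivity) (fun p => by positivity)
  have hFsum : Summable F := by
    rw [← summable_abs_iff]
    refine Summable.of_nonneg_of_le (fun t => abs_nonneg _) (fun t => ?_) hGsum
    simp only [hF, abs_mul, abs_pow]
    have h3 : |l 3| ^ ((S : ℤ) - t.1 - t.2.1 - t.2.2).natAbs ≤ 1 :=
      pow_le_one₀ (abs_nonneg _) (hl 3).le
    refine le_trans (mul_le_of_le_one_right (by positivity) h3) (le_of_eq (by ring))
  -- fiberwise sums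
  have h3s : ∀ t1 t2 : ℤ, HasSum (fun t3 : ℤ => F (t1, t2, t3))
      (l 0 ^ t1.natAbs * l 1 ^ t2.natAbs *
        (Acoef (l 2) (l 3) * l 2 ^ ((S : ℤ) - t1 - t2).natAbs
          + Acoef (l 3) (l 2) * l 3 ^ ((S : ℤ) - t1 - t2).natAbs)) := by
    intro t1 t2
    have h := (convInt (hl 2) (hl 3) (hd 2 3 (by decide)) ((S : ℤ) - t1 - t2)).mul_left
      (l 0 ^ t1.natAbs * l 1 ^ t2.natAbs)
    have e : (fun t3 : ℤ => F (t1, t2, t3)) = fun t3 : ℤ =>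
        l 0 ^ t1.natAbs * l 1 ^ t2.natAbs *
          (l 2 ^ t3.natAbs * l 3 ^ ((S : ℤ) - t1 - t2 - t3).natAbs) := by
      funext t3; simp only [hF]; ring
    rw [e]
    exact h
  have h2s : ∀ t1 : ℤ, HasSum (fun t2 : ℤ =>
      l 0 ^ t1.natAbs * l 1 ^ t2.natAbs *
        (Acoef (l 2) (l 3) * l 2 ^ ((S : ℤ) - t1 - t2).natAbs
          + Acoef (l 3) (l 2) * l 3 ^ ((S : ℤ) - t1 - t2).natAbs))
      (l 0 ^ t1.natAbs * Acoef (l 2) (l 3) *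
          (Acoef (l 1) (l 2) * l 1 ^ ((S : ℤ) - t1).natAbs
            + Acoef (l 2) (l 1) * l 2 ^ ((S : ℤ) - t1).natAbs)
        + l 0 ^ t1.natAbs * Acoef (l 3) (l 2) *
          (Acoef (l 1) (l 3) * l 1 ^ ((S : ℤ) - t1).natAbs
            + Acoef (l 3) (l 1) * l 3 ^ ((S : ℤ) - t1).natAbs)) := by
    intro t1
    have hA := (convInt (hl 1) (hl 2) (hd 1 2 (by decide)) ((S : ℤ) - t1)).mul_left
      (l 0 ^ t1.natAbs * Acoef (l 2) (l 3))
    have hB := (convInt (hl 1) (hl 3) (hd 1 3 (by decide)) ((S : ℤ) - t1)).mul_left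
      (l 0 ^ t1.natAbs * Acoef (l 3) (l 2))
    have h := hA.add hB
    have e : (fun t2 : ℤ =>
        l 0 ^ t1.natAbs * l 1 ^ t2.natAbs *
          (Acoef (l 2) (l 3) * l 2 ^ ((S : ℤ) - t1 - t2).natAbs
            + Acoef (l 3) (l 2) * l 3 ^ ((S : ℤ) - t1 - t2).natAbs))
        = fun t2 : ℤ =>
          l 0 ^ t1.natAbs * Acoef (l 2) (l 3) *
              (l 1 ^ t2.natAbs * l 2 ^ ((S : ℤ) - t1 - t2).natAbs)
            + l 0 ^ t1.natAbs * Acoef (l 3) (l 2) *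
              (l 1 ^ t2.natAbs * l 3 ^ ((S : ℤ) - t1 - t2).natAbs) := by
      funext t2; ring
    rw [e]
    exact h
  have hT : HasSum (fun t1 : ℤ =>
      l 0 ^ t1.natAbs * Acoef (l 2) (l 3) *
          (Acoef (l 1) (l 2) * l 1 ^ ((S : ℤ) - t1).natAbs
            + Acoef (l 2) (l 1) * l 2 ^ ((S : ℤ) - t1).natAbs)
        + l 0 ^ t1.natAbs * Acoef (l 3) (l 2) *
          (Acoef (l 1) (l 3) * l 1 ^ ((S : ℤ) - t1).natAbs
            + Acoef (l 3) (l 1) * l 3 ^ ((S : ℤ) - t1).natAbs))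
      ((Acoef (l 2) (l 3) * Acoef (l 1) (l 2) + Acoef (l 3) (l 2) * Acoef (l 1) (l 3)) *
          (Acoef (l 0) (l 1) * l 0 ^ ((S : ℤ)).natAbs + Acoef (l 1) (l 0) * l 1 ^ ((S : ℤ)).natAbs)
        + Acoef (l 2) (l 3) * Acoef (l 2) (l 1) *
          (Acoef (l 0) (l 2) * l 0 ^ ((S : ℤ)).natAbs + Acoef (l 2) (l 0) * l 2 ^ ((S : ℤ)).natAbs)
        + Acoef (l 3) (l 2) * Acoef (l 3) (l 1) *
          (Acoef (l 0) (l 3) * l 0 ^ ((S : ℤ)).natAbs + Acoef (l 3) (l 0) * l 3 ^ ((S : ℤ)).natAbs)) := by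
    have hA := (convInt (hl 0) (hl 1) (hd 0 1 (by decide)) (S : ℤ)).mul_left
      (Acoef (l 2) (l 3) * Acoef (l 1) (l 2) + Acoef (l 3) (l 2) * Acoef (l 1) (l 3))
    have hB := (convInt (hl 0) (hl 2) (hd 0 2 (by decide)) (S : ℤ)).mul_left
      (Acoef (l 2) (l 3) * Acoef (l 2) (l 1))
    have hC := (convInt (hl 0) (hl 3) (hd 0 3 (by decide)) (S : ℤ)).mul_left
      (Acoef (l 3) (l 2) * Acoef (l 3) (l 1))
    have h := (hA.add hB).add hC
    have e : (fun t1 : ℤ =>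
        l 0 ^ t1.natAbs * Acoef (l 2) (l 3) *
            (Acoef (l 1) (l 2) * l 1 ^ ((S : ℤ) - t1).natAbs
              + Acoef (l 2) (l 1) * l 2 ^ ((S : ℤ) - t1).natAbs)
          + l 0 ^ t1.natAbs * Acoef (l 3) (l 2) *
            (Acoef (l 1) (l 3) * l 1 ^ ((S : ℤ) - t1).natAbs
              + Acoef (l 3) (l 1) * l 3 ^ ((S : ℤ) - t1).natAbs))
        = fun t1 : ℤ =>
          ((Acoef (l 2) (l 3) * Acoef (l 1) (l 2) + Acoef (l 3) (l 2) * Acoef (l 1) (l 3)) *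
              (l 0 ^ t1.natAbs * l 1 ^ ((S : ℤ) - t1).natAbs)
            + Acoef (l 2) (l 3) * Acoef (l 2) (l 1) *
              (l 0 ^ t1.natAbs * l 2 ^ ((S : ℤ) - t1).natAbs))
            + Acoef (l 3) (l 2) * Acoef (l 3) (l 1) *
              (l 0 ^ t1.natAbs * l 3 ^ ((S : ℤ) - t1).natAbs) := by
      funext t1; ring
    rw [e]
    exact h
  have hfib : ∀ t1 : ℤ, HasSum (fun p : ℤ × ℤ => F (t1, p))
      (l 0 ^ t1.natAbs * Acoef (l 2) (l 3) *
          (Acoef (l 1) (l 2) * l 1 ^ ((S : ℤ) - t1).natAbs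
            + Acoef (l 2) (l 1) * l 2 ^ ((S : ℤ) - t1).natAbs)
        + l 0 ^ t1.natAbs * Acoef (l 3) (l 2) *
          (Acoef (l 1) (l 3) * l 1 ^ ((S : ℤ) - t1).natAbs
            + Acoef (l 3) (l 1) * l 3 ^ ((S : ℤ) - t1).natAbs)) := by
    intro t1
    have hs : Summable (fun p : ℤ × ℤ => F (t1, p)) := hFsum.prod_factor t1
    have h1 : HasSum (fun t2 : ℤ =>
        l 0 ^ t1.natAbs * l 1 ^ t2.natAbs *
          (Acoef (l 2) (l 3) * l 2 ^ ((S : ℤ) - t1 - t2).natAbs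
            + Acoef (l 3) (l 2) * l 3 ^ ((S : ℤ) - t1 - t2).natAbs))
        (∑' p : ℤ × ℤ, F (t1, p)) :=
      hs.hasSum.prod_fiberwise fun t2 => h3s t1 t2
    exact (h1.unique (h2s t1)) ▸ hs.hasSum
  have htop := hFsum.hasSum.prod_fiberwise hfib
  have hLHS := htop.unique hT
  rw [hLHS]
  simp only [Int.natAbs_natCast]
  rw [Fin.sum_univ_four]
  rw [show (Finset.univ.erase (0 : Fin 4)) = {1, 2, 3} from by decide,
     show (Finset.univ.erase (1 : Fin 4)) = {0, 2, 3} from by decide,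
     show (Finset.univ.erase (2 : Fin 4)) = {0, 1, 3} from by decide,
     show (Finset.univ.erase (3 : Fin 4)) = {0, 1, 2} from by decide]
  rw [show ({1, 2, 3} : Finset (Fin 4)) = insert 1 {2, 3} from rfl,
     show ({0, 2, 3} : Finset (Fin 4)) = insert 0 {2, 3} from rfl,
     show ({0, 1, 3} : Finset (Fin 4)) = insert 0 {1, 3} from rfl,
     show ({0, 1, 2} : Finset (Fin 4)) = insert 0 {1, 2} from rfl]
  rw [Finset.prod_insert (by decide), Finset.prod_insert (by decide),
     Finset.prod_insert (by decide), Finset.prod_insert (by decide),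
     Finset.prod_insert (by decide), Finset.prod_insert (by decide),
     Finset.prod_insert (by decide), Finset.prod_insert (by decide),
     Finset.prod_singleton, Finset.prod_singleton, Finset.prod_singleton,
     Finset.prod_singleton]
  simp only [pow_add]
  have := finalAlg (l 0) (l 1) (l 2) (l 3) (l 0 ^ S) (l 1 ^ S) (l 2 ^ S) (l 3 ^ S)
    (hne 0 1 (by decide)) (hne 0 2 (by decide)) (hne 0 3 (by decide))
    (hne 1 2 (by decide)) (hne 1 3 (by decide)) (hne 2 3 (by decide))
    (hone 0 1) (hone 0 2) (hone 0 3) (hone 1 2) (hone 1 3) (hone 2 3)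
  linear_combination this
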